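/- (Logarithmic Sobolev inequality implies multiplicative Sobolev inequality.) Let p ∈ (0, ∞), let β ∈ ℝ with β < 1/p (β plays the role of 1/q in the paper, allowing q negative or q = ∞), let C > 0 and w > 0, and suppose ‖f‖_p > 0. If the logarithmic Sobolev inequality ∫_M f^p ln(f^p/‖f‖_p^p) dμ ≤ (1/p − β)^{−1} ‖f‖_p^p ln(C w/‖f‖_p) holds, then for every s ∈ (0, p), setting θ := (1/s − 1/p)/(1/s − β) ∈ (0, 1), one has ‖f‖_p ≤ (C w)^θ ‖f‖_s^{1−θ}. -/

import Mathlib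

open MeasureTheory ENNReal

/-- Auxiliary: bound for `t * |log t|`. -/
lemma aux_mul_abs_log_le {t : ℝ} (ht : 0 ≤ t) :
    t * |Real.log t| ≤ 2 * t ^ ((1:ℝ)/2) + t ^ (2:ℝ) := by
  rcases eq_or_lt_of_le ht with h | h
  · simp [← h]
  · have hr : 0 < t ^ ((1:ℝ)/2) := Real.rpow_pos_of_pos h _
    have hr2 : t ^ ((1:ℝ)/2) * t ^ ((1:ℝ)/2) = t := by
      rw [← Real.rpow_add h]; norm_num
    have hlogr : Real.log (t ^ ((1:ℝ)/2)) = (1/2) * Real.log t := Real.log_rpow h _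
    rcases le_or_gt 1 t with h1 | h1
    · have hl0 : 0 ≤ Real.log t := Real.log_nonneg h1
      rw [abs_of_nonneg hl0]
      have := Real.log_le_sub_one_of_pos h
      have ht2 : t ^ (2:ℝ) = t * t := by
        rw [show (2:ℝ) = 1 + 1 by norm_num, Real.rpow_add h]; simp
      have hmul : t * Real.log t ≤ t * (t - 1) := mul_le_mul_of_nonneg_left this ht
      rw [ht2]
      nlinarith [hr.le, h.le, hmul]
    · have hl0 : Real.log t ≤ 0 := Real.log_nonpos ht h1.le
      rw [abs_of_nonpos hl0]
      have hinv : Real.log ((t ^ ((1:ℝ)/2))⁻¹) ≤ (t ^ ((1:ℝ)/2))⁻¹ - 1 :=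
        Real.log_le_sub_one_of_pos (by positivity)
      rw [Real.log_inv, hlogr] at hinv
      have htr : t * (t ^ ((1:ℝ)/2))⁻¹ = t ^ ((1:ℝ)/2) := by
        field_simp
        nlinarith [hr2]
      have h2 : t * (-Real.log t) ≤ 2 * (t * (t ^ ((1:ℝ)/2))⁻¹) := by
        nlinarith [h.le]
      rw [htr] at h2
      have : (0:ℝ) ≤ t ^ (2:ℝ) := Real.rpow_nonneg ht _
      linarith

set_option maxHeartbeats 1000000

theorem stmt6 {M : Type*} [MeasurableSpace M] (μ : Measure M) [SigmaFinite μ]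
    (f : M → ℝ) (hfm : Measurable f) (hf0 : ∀ x, 0 ≤ f x)
    (hfLp : ∀ r : ℝ, 0 < r → Integrable (fun x => f x ^ r) μ)
    (p β C w : ℝ) (hp : 0 < p) (hβ : β < 1 / p) (hC : 0 < C) (hw : 0 < w)
    (hfpos : 0 < (∫ x, f x ^ p ∂μ) ^ (1 / p))
    (hLSI : ∫ x, f x ^ p * Real.log (f x ^ p / ∫ y, f y ^ p ∂μ) ∂μ ≤
      (1 / p - β)⁻¹ * (∫ y, f y ^ p ∂μ) *
        Real.log (C * w / (∫ y, f y ^ p ∂μ) ^ (1 / p))) :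
    ∀ s : ℝ, 0 < s → s < p →
      (∫ x, f x ^ p ∂μ) ^ (1 / p) ≤
        (C * w) ^ ((1 / s - 1 / p) / (1 / s - β)) *
          ((∫ x, f x ^ s ∂μ) ^ (1 / s)) ^ (1 - (1 / s - 1 / p) / (1 / s - β)) := by
  intro s hs hsp
  set N := ∫ y, f y ^ p ∂μ with hNdef
  set S := ∫ x, f x ^ s ∂μ with hSdef
  have hint_fp : Integrable (fun x => f x ^ p) μ := hfLp p hp
  have hint_fs : Integrable (fun x => f x ^ s) μ := hfLp s hs
  have hNnn : 0 ≤ N := integral_nonneg fun x => Real.rpow_nonneg (hf0 x) p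
  have hN : 0 < N := by
    rcases eq_or_lt_of_le hNnn with h | h
    · rw [← h, Real.zero_rpow (by positivity : (1:ℝ)/p ≠ 0)] at hfpos
      exact absurd hfpos (lt_irrefl 0)
    · exact h
  have hSnn : 0 ≤ S := integral_nonneg fun x => Real.rpow_nonneg (hf0 x) s
  have hS : 0 < S := by
    rcases eq_or_lt_of_le hSnn with h | h
    · exfalso
      have h0 : (fun x => f x ^ s) =ᵐ[μ] 0 :=
        (integral_eq_zero_iff_of_nonneg (fun x => Real.rpow_nonneg (hf0 x) s) hint_fs).mp h.symm
      have h1 : (fun x => f x ^ p) =ᵐ[μ] 0 := by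
        filter_upwards [h0] with x hx
        have hfx : f x = 0 := (Real.rpow_eq_zero (hf0 x) hs.ne').mp hx
        simp [hfx, Real.zero_rpow hp.ne']
      have hz : N = 0 := by rw [hNdef]; exact integral_eq_zero_of_ae h1
      exact hN.ne' hz
    · exact h
  set a := Real.log N with hadef
  set b := Real.log S with hbdef
  set c := Real.log (C * w) with hcdef
  set g : M → ℝ := fun x => f x ^ p * Real.log (f x ^ p / N) with hgdef
  have hgmeas : AEStronglyMeasurable g μ := by
    apply Measurable.aestronglyMeasurable
    measurability
  have hgInt : Integrable g μ := by
    have hbound : Integrable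
        (fun x => 2 * f x ^ (p/2) + f x ^ (2*p) + |a| * f x ^ p) μ :=
      (((hfLp (p/2) (by positivity)).const_mul 2).add
        (hfLp (2*p) (by positivity))).add ((hfLp p hp).const_mul _)
    apply hbound.mono' hgmeas
    filter_upwards with x
    have ht : 0 ≤ f x ^ p := Real.rpow_nonneg (hf0 x) p
    have e1 : f x ^ (p/2) = (f x ^ p) ^ ((1:ℝ)/2) := by
      rw [show p/2 = p*(1/2) by ring]; exact Real.rpow_mul (hf0 x) p (1/2)
    have e2 : f x ^ (2*p) = (f x ^ p) ^ (2:ℝ) := by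
      rw [show 2*p = p*2 by ring]; exact Real.rpow_mul (hf0 x) p 2
    have hlog : |Real.log (f x ^ p / N)| ≤ |Real.log (f x ^ p)| + |a| := by
      rcases eq_or_lt_of_le ht with h | h
      · rw [← h]
        simp [abs_nonneg]
      · rw [Real.log_div h.ne' hN.ne']
        exact (abs_sub _ _).trans (by rw [hadef])
    have key := aux_mul_abs_log_le ht
    have : ‖g x‖ = f x ^ p * |Real.log (f x ^ p / N)| := by
      rw [hgdef]; simp [abs_mul, abs_of_nonneg ht]
    rw [this, e1, e2]
    have h3 : f x ^ p * |Real.log (f x ^ p / N)| ≤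
        f x ^ p * |Real.log (f x ^ p)| + |a| * f x ^ p := by
      nlinarith [abs_nonneg (Real.log (f x ^ p)), mul_le_mul_of_nonneg_left hlog ht]
    calc f x ^ p * |Real.log (f x ^ p / N)|
        ≤ f x ^ p * |Real.log (f x ^ p)| + |a| * f x ^ p := h3
      _ ≤ (2 * (f x ^ p) ^ ((1:ℝ)/2) + (f x ^ p) ^ (2:ℝ)) + |a| * f x ^ p := by
          linarith [key]
  set E := ∫ x, g x ∂μ with hEdef
  have hE' : E ≤ (1/p - β)⁻¹ * N * (c - 1/p * a) := by
    have hcw : Real.log (C * w / N ^ ((1:ℝ)/p)) = c - 1/p * a := by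
      rw [Real.log_div (by positivity) (by positivity), Real.log_rpow hN]
    calc E ≤ (1/p - β)⁻¹ * N * Real.log (C * w / N ^ ((1:ℝ)/p)) := hLSI
      _ = (1/p - β)⁻¹ * N * (c - 1/p * a) := by rw [hcw]
  -- pointwise Jensen-type inequality
  have hpt : ∀ x, (s-p)/p * g x + ((s/p) * a - b) * f x ^ p ≤ (N/S) * f x ^ s - f x ^ p := by
    intro x
    rcases eq_or_lt_of_le (hf0 x) with h | h
    · rw [hgdef]
      simp [← h, Real.zero_rpow hp.ne', Real.zero_rpow hs.ne']
    · have hfp : 0 < f x ^ p := Real.rpow_pos_of_pos h p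
      have hfsp : 0 < f x ^ (s-p) := Real.rpow_pos_of_pos h _
      have hu : 0 < f x ^ (s-p) * N / S := by positivity
      have hlog := Real.log_le_sub_one_of_pos hu
      have h1 : Real.log (f x ^ p / N) = p * Real.log (f x) - a := by
        rw [Real.log_div hfp.ne' hN.ne', Real.log_rpow h, hadef]
      have h2 : Real.log (f x ^ (s-p) * N / S) = (s-p) * Real.log (f x) + a - b := by
        rw [Real.log_div (by positivity) hS.ne', Real.log_mul hfsp.ne' hN.ne',
          Real.log_rpow h, hadef, hbdef]
      have h3 : f x ^ p * f x ^ (s-p) = f x ^ s := by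
        rw [← Real.rpow_add h]; congr 1; ring
      have h4 : (s-p)/p * g x + ((s/p) * a - b) * f x ^ p
          = f x ^ p * Real.log (f x ^ (s-p) * N / S) := by
        simp only [hgdef]
        rw [h1, h2]
        field_simp
        ring
      rw [h4]
      calc f x ^ p * Real.log (f x ^ (s-p) * N / S)
          ≤ f x ^ p * (f x ^ (s-p) * N / S - 1) :=
            mul_le_mul_of_nonneg_left hlog hfp.le
        _ = (N/S) * f x ^ s - f x ^ p := by
            rw [mul_sub, mul_one, show f x ^ p * (f x ^ (s-p) * N / S)
              = (f x ^ p * f x ^ (s-p)) * N / S by ring, h3]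
            ring
  -- integrate the pointwise inequality
  have step : (s-p)/p * E + ((s/p) * a - b) * N ≤ 0 := by
    have hL : Integrable (fun x => (s-p)/p * g x + ((s/p) * a - b) * f x ^ p) μ :=
      (hgInt.const_mul _).add (hint_fp.const_mul _)
    have hR : Integrable (fun x => (N/S) * f x ^ s - f x ^ p) μ :=
      (hint_fs.const_mul _).sub hint_fp
    have h1 := integral_mono hL hR hpt
    rw [integral_add (hgInt.const_mul _) (hint_fp.const_mul _), integral_const_mul,
      integral_const_mul, integral_sub (hint_fs.const_mul _) hint_fp,
      integral_const_mul] at h1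
    have h2 : N/S * S = N := div_mul_cancel₀ N hS.ne'
    rw [hEdef]
    rw [← hNdef, ← hSdef] at h1
    linarith
  clear_value E
  clear_value g
  clear_value a b c
  clear_value S N
  -- key linear inequality in a, b, c
  have hD1 : 0 < 1/p - β := by linarith
  have h1s1p : 1/p < 1/s := one_div_lt_one_div_of_lt hs hsp
  have hD2 : 0 < 1/s - β := by linarith
  have key : s/p * a - b ≤ (p-s)/p * (1/p - β)⁻¹ * (c - 1/p * a) := by
    have hcoef : (0:ℝ) ≤ (p-s)/p := div_nonneg (by linarith) hp.le
    have h5 : (s/p * a - b) * N ≤ ((p-s)/p * (1/p - β)⁻¹ * (c - 1/p * a)) * N := by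
      have h6 := mul_le_mul_of_nonneg_left hE' hcoef
      have h7 : (s/p * a - b) * N ≤ (p-s)/p * E := by
        have hsign : (p-s)/p * E = -((s-p)/p * E) := by ring
        rw [hsign]; linarith
      exact h7.trans (h6.trans_eq (by ring))
    exact le_of_mul_le_mul_right h5 hN
  have key2 : (s/p * a - b) * (1/p - β) ≤ (p-s)/p * (c - 1/p * a) := by
    have h := mul_le_mul_of_nonneg_right key hD1.le
    calc (s/p * a - b) * (1/p - β)
        ≤ (p-s)/p * (1/p - β)⁻¹ * (c - 1/p * a) * (1/p - β) := h
      _ = (p-s)/p * (c - 1/p * a) * ((1/p - β)⁻¹ * (1/p - β)) := by ring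
      _ = (p-s)/p * (c - 1/p * a) := by rw [inv_mul_cancel₀ hD1.ne']; ring
  have goal' : (1/s - β) * (1/p * a) ≤ (1/s - 1/p) * c + (1/p - β) * (1/s * b) := by
    have h := mul_le_mul_of_nonneg_left key2 (by positivity : (0:ℝ) ≤ 1/s)
    have e1 : (1/s) * ((s/p * a - b) * (1/p - β)) = (1/p * a - 1/s * b) * (1/p - β) := by
      field_simp
    have e0 : (1:ℝ)/s * ((p-s)/p) = 1/s - 1/p := by
      field_simp
    have e2 : (1/s) * ((p-s)/p * (c - 1/p * a)) = (1/s - 1/p) * (c - 1/p * a) := by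
      rw [← e0]; ring
    rw [e1, e2] at h
    nlinarith [h]

  have final : 1/p * a ≤ (1/s - 1/p)/(1/s - β) * c + (1 - (1/s - 1/p)/(1/s - β)) * (1/s * b) := by
    rw [← mul_le_mul_iff_right₀ hD2]
    have u1 : (1/s - β) * ((1/s - 1/p)/(1/s - β)) = 1/s - 1/p := by
      rw [mul_comm, div_mul_cancel₀ _ hD2.ne']
    have u2 : (1/s - β) * (1 - (1/s - 1/p)/(1/s - β)) = 1/p - β := by
      rw [mul_sub, mul_one, u1]; ring
    have e3 : (1/s - β) * ((1/s - 1/p)/(1/s - β) * c + (1 - (1/s - 1/p)/(1/s - β)) * (1/s * b))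
        = (1/s - 1/p) * c + (1/p - β) * (1/s * b) := by
      rw [mul_add, ← mul_assoc, ← mul_assoc, u1, u2]
    rw [e3]
    exact goal'
  -- convert to the multiplicative form
  have hNp : 0 < N ^ ((1:ℝ)/p) := Real.rpow_pos_of_pos hN _
  have hSs : 0 < S ^ ((1:ℝ)/s) := Real.rpow_pos_of_pos hS _
  have hR : 0 < (C * w) ^ ((1/s - 1/p)/(1/s - β)) *
      (S ^ ((1:ℝ)/s)) ^ (1 - (1/s - 1/p)/(1/s - β)) := by positivity
  rw [← Real.log_le_log_iff hNp hR, Real.log_mul (by positivity) (by positivity),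
    Real.log_rpow hN, Real.log_rpow (by positivity), Real.log_rpow hSs,
    Real.log_rpow hS]
  rw [← hadef, ← hbdef, ← hcdef]
  linarith [final]
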